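/- In one dimension: let 0 ≤ ℓ ≤ n be integers. There exists a constant C > 0 such that for every half-line I = [a,∞) or I = (−∞,a] and every n-times continuously differentiable function u on I with u and u^{(n)} bounded on I, one has ‖u^{(ℓ)}‖_{L^∞(I)} ≤ C ‖u‖_{L^∞(I)}^{1−ℓ/n} ‖u^{(n)}‖_{L^∞(I)}^{ℓ/n}. -/

import Mathlib

open Set Finset

-- Lemma S
private lemma iterDeriv_subset {u : ℝ → ℂ} {I J : Set ℝ} {n m : ℕ}
    (hJI : J ⊆ I) (hI : UniqueDiffOn ℝ I) (hJ : UniqueDiffOn ℝ J)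
    (hu : ContDiffOn ℝ n u I) (hmn : m ≤ n) {z : ℝ} (hz : z ∈ J) :
    iteratedDerivWithin m u J z = iteratedDerivWithin m u I z := by
  have h := ((hu.ftaylorSeriesWithin hI).mono hJI).eq_iteratedFDerivWithin_of_uniqueDiffOn
    (by exact_mod_cast hmn) hJ hz
  simp only [iteratedDerivWithin_eq_iteratedFDerivWithin, ← h]
  rfl

-- Lemma T: Taylor bound on convex sets, either direction, non-sharp constant
private lemma taylor_bound {n : ℕ} {u : ℝ → ℂ} {J : Set ℝ} (hJconv : Convex ℝ J)
    (hJ : UniqueDiffOn ℝ J) (hu : ContDiffOn ℝ n u J) {M : ℝ}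
    (hM : ∀ z ∈ J, ‖iteratedDerivWithin n u J z‖ ≤ M)
    {x₀ : ℝ} (hx₀ : x₀ ∈ J) : ∀ x ∈ J,
    ‖u x - ∑ k ∈ Finset.range n,
        (((x - x₀) ^ k / k.factorial : ℝ)) • iteratedDerivWithin k u J x₀‖
      ≤ M * |x - x₀| ^ n := by
  induction n generalizing u with
  | zero =>
    intro x hx
    simpa using hM x hx
  | succ n IH =>
    intro x hx
    set c : ℕ → ℂ := fun k => iteratedDerivWithin k u J x₀ with hc
    have hu' : ContDiffOn ℝ n (derivWithin u J) J :=
      hu.derivWithin hJ (by exact_mod_cast le_refl (n+1))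
    have hM' : ∀ z ∈ J, ‖iteratedDerivWithin n (derivWithin u J) J z‖ ≤ M := by
      intro z hz
      rw [← iteratedDerivWithin_succ']
      exact hM z hz
    have hcoef : ∀ k, iteratedDerivWithin k (derivWithin u J) J x₀ = c (k+1) := by
      intro k
      rw [hc]
      exact (congrFun iteratedDerivWithin_succ' x₀).symm
    -- the function g and its derivative
    set g : ℝ → ℂ := fun t => u t - ∑ k ∈ Finset.range (n+1),
        (((t - x₀) ^ k / k.factorial : ℝ)) • c k with hg
    have hgderiv : ∀ t ∈ J, HasDerivWithinAt g
        (derivWithin u J t - ∑ k ∈ Finset.range n,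
          (((t - x₀) ^ k / k.factorial : ℝ)) • c (k+1)) J t := by
      intro t ht
      have h1 : HasDerivWithinAt u (derivWithin u J t) J t :=
        ((hu.differentiableOn (by simp)) t
          ht).hasDerivWithinAt
      have h2 : HasDerivAt (fun t : ℝ => ∑ k ∈ Finset.range (n+1),
          (((t - x₀) ^ k / k.factorial : ℝ)) • c k)
          (∑ k ∈ Finset.range (n+1),
            ((k * (t - x₀) ^ (k-1) / k.factorial : ℝ)) • c k) t := by
        apply HasDerivAt.fun_sum
        intro k _
        have : HasDerivAt (fun t : ℝ => ((t - x₀) ^ k / k.factorial : ℝ))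
            ((k * (t - x₀) ^ (k-1) * 1) / k.factorial) t :=
          (((hasDerivAt_id t).sub_const x₀).pow k).div_const _
        simpa using this.smul_const (c k)
      have h3 : (∑ k ∈ Finset.range (n+1),
            ((k * (t - x₀) ^ (k-1) / k.factorial : ℝ)) • c k)
          = ∑ k ∈ Finset.range n, (((t - x₀) ^ k / k.factorial : ℝ)) • c (k+1) := by
        rw [Finset.sum_range_succ']
        simp only [Nat.cast_zero, pow_zero, Nat.factorial_zero, Nat.cast_one, zero_mul,
          zero_div, zero_smul, add_zero]
        apply Finset.sum_congr rfl
        intro k _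
        congr 1
        rw [Nat.factorial_succ]
        push_cast
        rw [mul_div_mul_left _ _ (by positivity : ((k:ℝ)+1) ≠ 0)]
      rw [← h3]
      exact h1.sub (h2.hasDerivWithinAt)
    -- bound on the derivative over the segment
    set S : Set ℝ := segment ℝ x₀ x with hS
    have hSJ : S ⊆ J := hJconv.segment_subset hx₀ hx
    have hdist : ∀ t ∈ S, |t - x₀| ≤ |x - x₀| := by
      intro t ht
      obtain ⟨p, q, hp, hq, hpq, rfl⟩ := ht
      have : p • x₀ + q • x - x₀ = q * (x - x₀) := by
        have : p = 1 - q := by linarith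
        subst this; simp [smul_eq_mul]; ring
      rw [this, abs_mul, abs_of_nonneg hq]
      nlinarith [abs_nonneg (x - x₀)]
    have hbound : ∀ t ∈ S, ‖derivWithin u J t - ∑ k ∈ Finset.range n,
        (((t - x₀) ^ k / k.factorial : ℝ)) • c (k+1)‖ ≤ M * |x - x₀| ^ n := by
      intro t ht
      have := IH hu' hM' t (hSJ ht)
      simp only [hcoef] at this
      calc ‖derivWithin u J t - ∑ k ∈ Finset.range n,
            (((t - x₀) ^ k / k.factorial : ℝ)) • c (k+1)‖ ≤ M * |t - x₀| ^ n := this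
        _ ≤ M * |x - x₀| ^ n := by
            have hM0 : 0 ≤ M := le_trans (norm_nonneg _) (hM x₀ hx₀)
            exact mul_le_mul_of_nonneg_left
              (pow_le_pow_left₀ (abs_nonneg _) (hdist t ht) n) hM0
    -- mean value inequality on the segment
    have key : ‖g x - g x₀‖ ≤ (M * |x - x₀| ^ n) * ‖x - x₀‖ := by
      apply Convex.norm_image_sub_le_of_norm_hasDerivWithin_le
        (f' := fun t => derivWithin u J t - ∑ k ∈ Finset.range n,
          (((t - x₀) ^ k / k.factorial : ℝ)) • c (k+1))
        (fun t ht => (hgderiv t (hSJ ht)).mono hSJ) hbound (convex_segment _ _)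
        (left_mem_segment ℝ x₀ x) (right_mem_segment ℝ x₀ x)
    have hgx₀ : g x₀ = 0 := by
      rw [hg]
      simp only [sub_self]
      rw [Finset.sum_eq_single 0]
      · simp [hc, iteratedDerivWithin_zero]
      · intro k _ hk
        simp [zero_pow hk]
      · simp
    rw [hgx₀, sub_zero] at key
    calc ‖g x‖ ≤ (M * |x - x₀| ^ n) * ‖x - x₀‖ := key
      _ = M * |x - x₀| ^ (n + 1) := by rw [Real.norm_eq_abs]; ring

-- Lemma P: coefficient recovery from values at 0,1,...,n-1
private lemma coeff_recovery (n : ℕ) : ∃ D > (0:ℝ), ∀ (c : Fin n → ℂ) (B : ℝ),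
    (∀ i : Fin n, ‖∑ m : Fin n, c m * ((i : ℕ) : ℂ) ^ (m : ℕ)‖ ≤ B) →
    ∀ k : Fin n, ‖c k‖ ≤ D * B := by
  classical
  set V : Matrix (Fin n) (Fin n) ℂ := Matrix.vandermonde (fun i : Fin n => ((i : ℕ) : ℂ)) with hV
  have hdet : IsUnit V.det := by
    have : V.det ≠ 0 := by
      rw [hV, Matrix.det_vandermonde]
      apply Finset.prod_ne_zero_iff.mpr
      intro i _
      apply Finset.prod_ne_zero_iff.mpr
      intro j hj
      rw [Finset.mem_Ioi] at hj
      have : ((j : ℕ) : ℂ) ≠ ((i : ℕ) : ℂ) := by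
        simp only [ne_eq, Nat.cast_inj]
        exact fun h => absurd (Fin.ext h : j = i) (ne_of_gt hj)
      exact sub_ne_zero.mpr this
    exact this.isUnit
  refine ⟨(∑ k : Fin n, ∑ i : Fin n, ‖V⁻¹ k i‖) + 1, by positivity, ?_⟩
  intro c B hB k
  have hB0 : 0 ≤ B := le_trans (norm_nonneg _) (hB k)
  set e : Fin n → ℂ := fun i => ∑ m : Fin n, c m * ((i : ℕ) : ℂ) ^ (m : ℕ) with he
  have hVc : V.mulVec c = e := by
    funext i
    simp only [he, hV, Matrix.mulVec, dotProduct, Matrix.vandermonde]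
    exact Finset.sum_congr rfl fun m _ => mul_comm _ _
  have hc : c = V⁻¹.mulVec e := by
    rw [← hVc, Matrix.mulVec_mulVec, Matrix.nonsing_inv_mul V hdet, Matrix.one_mulVec]
  have : ‖c k‖ ≤ ∑ i : Fin n, ‖V⁻¹ k i‖ * B := by
    rw [hc]
    simp only [Matrix.mulVec, dotProduct]
    refine le_trans (norm_sum_le _ _) (Finset.sum_le_sum fun i _ => ?_)
    rw [norm_mul]
    exact mul_le_mul_of_nonneg_left (hB i) (norm_nonneg _)
  refine le_trans this ?_
  rw [← Finset.sum_mul]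
  apply mul_le_mul_of_nonneg_right _ hB0
  calc ∑ i : Fin n, ‖V⁻¹ k i‖ ≤ ∑ k : Fin n, ∑ i : Fin n, ‖V⁻¹ k i‖ :=
        Finset.single_le_sum (fun k _ => Finset.sum_nonneg fun i _ => norm_nonneg _)
          (Finset.mem_univ k)
    _ ≤ _ := by linarith

private lemma core_bound {n ℓ : ℕ} (hn : 2 ≤ n) (hl : ℓ < n) {D : ℝ}
    (hDp : ∀ (c : Fin n → ℂ) (B : ℝ),
      (∀ i : Fin n, ‖∑ m : Fin n, c m * ((i : ℕ) : ℂ) ^ (m : ℕ)‖ ≤ B) →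
      ∀ k : Fin n, ‖c k‖ ≤ D * B)
    {I : Set ℝ} (hIconv : Convex ℝ I) (hI : UniqueDiffOn ℝ I)
    {u : ℝ → ℂ} {Mu Mn : ℝ} (hu : ContDiffOn ℝ n u I)
    (hMu : ∀ z ∈ I, ‖u z‖ ≤ Mu) (hMn : ∀ z ∈ I, ‖iteratedDerivWithin n u I z‖ ≤ Mn)
    {x s h : ℝ} (hx : x ∈ I) (hs : |s| = 1) (hh : 0 < h)
    (hnodes : ∀ i : ℕ, i < n → x + s * i * h ∈ I) :
    ‖iteratedDerivWithin ℓ u I x‖ ≤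
      (D * Nat.factorial ℓ) * ((Mu + Mn * (n * h) ^ n) / h ^ ℓ) := by
  have hMn0 : 0 ≤ Mn := le_trans (norm_nonneg _) (hMn x hx)
  have hMu0 : 0 ≤ Mu := le_trans (norm_nonneg _) (hMu x hx)
  set y : ℝ := x + s * (n - 1 : ℕ) * h with hy
  have hyI : y ∈ I := hnodes (n-1) (by omega)
  have hn1 : (0:ℝ) < ((n - 1 : ℕ) : ℝ) := by
    have : 1 ≤ n - 1 := by omega
    exact_mod_cast Nat.lt_of_lt_of_le Nat.zero_lt_one this
  have hxy : x ≠ y := by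
    intro hxy
    have : s * (n - 1 : ℕ) * h = 0 := by linarith [hxy ▸ hy]
    have hs0 : s ≠ 0 := by intro h0; rw [h0] at hs; simp at hs
    rcases mul_eq_zero.mp this with h1 | h2
    · rcases mul_eq_zero.mp h1 with h3 | h4
      · exact hs0 h3
      · linarith
    · linarith
  set J : Set ℝ := Set.Icc (min x y) (max x y) with hJ
  have hJI : J ⊆ I := by
    rw [hJ, ← segment_eq_Icc']
    exact hIconv.segment_subset hx hyI
  have hJu : UniqueDiffOn ℝ J := uniqueDiffOn_Icc (min_lt_max.mpr hxy)
  have huJ : ContDiffOn ℝ n u J := hu.mono hJI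
  have hMnJ : ∀ z ∈ J, ‖iteratedDerivWithin n u J z‖ ≤ Mn := by
    intro z hz
    rw [iterDeriv_subset hJI hI hJu hu le_rfl hz]
    exact hMn z (hJI hz)
  have hxJ : x ∈ J := by
    rw [hJ]; exact ⟨min_le_left _ _, le_max_left _ _⟩
  have hscases : s = 1 ∨ s = -1 := abs_eq (by norm_num : (0:ℝ) ≤ 1) |>.mp hs
  have hnodeJ : ∀ i : ℕ, i < n → x + s * i * h ∈ J := by
    intro i hi
    have hin : (i : ℝ) ≤ ((n - 1 : ℕ) : ℝ) := by
      have : i ≤ n - 1 := by omega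
      exact_mod_cast this
    have hi0 : (0:ℝ) ≤ (i:ℝ) := Nat.cast_nonneg i
    rcases hscases with rfl | rfl
    · have hxley : x ≤ y := by rw [hy]; nlinarith
      rw [hJ, min_eq_left hxley, max_eq_right hxley]
      constructor <;> [nlinarith; rw [hy]] <;> nlinarith
    · have hylex : y ≤ x := by rw [hy]; nlinarith
      rw [hJ, min_eq_right hylex, max_eq_left hylex]
      constructor <;> [rw [hy]; skip] <;> nlinarith
  set d : ℕ → ℂ := fun k => iteratedDerivWithin k u J x with hd
  set c : Fin n → ℂ := fun m => (((s*h)^(m:ℕ) / (Nat.factorial (m:ℕ)) : ℝ)) • d (m:ℕ) with hc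
  set B : ℝ := Mu + Mn * (n * h) ^ n with hB
  have heval : ∀ i : Fin n, ‖∑ m : Fin n, c m * ((i : ℕ) : ℂ) ^ (m : ℕ)‖ ≤ B := by
    intro i
    have hiJ : x + s * (i:ℕ) * h ∈ J := hnodeJ i i.isLt
    have htay := taylor_bound (convex_Icc _ _) hJu huJ hMnJ hxJ _ hiJ
    have hsum : ∑ m : Fin n, c m * ((i : ℕ) : ℂ) ^ (m : ℕ)
        = ∑ k ∈ Finset.range n,
          (((x + s * (i:ℕ) * h - x) ^ k / Nat.factorial k : ℝ)) • d k := by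
      rw [Finset.sum_range fun k => (((x + s * (i:ℕ) * h - x) ^ k / Nat.factorial k : ℝ)) • d k]
      apply Finset.sum_congr rfl
      intro m _
      rw [hc]
      simp only
      rw [Complex.real_smul, Complex.real_smul]
      push_cast
      ring
    rw [hsum]
    have h1 : ‖∑ k ∈ Finset.range n,
          (((x + s * (i:ℕ) * h - x) ^ k / Nat.factorial k : ℝ)) • d k‖
        ≤ ‖u (x + s * (i:ℕ) * h)‖ + Mn * |x + s * (i:ℕ) * h - x| ^ n := by
      set S := ∑ k ∈ Finset.range n,
        (((x + s * (i:ℕ) * h - x) ^ k / Nat.factorial k : ℝ)) • d k with hS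
      have : ‖S‖ ≤ ‖u (x + s * (i:ℕ) * h)‖ + ‖u (x + s * (i:ℕ) * h) - S‖ := by
        calc ‖S‖ = ‖u (x + s * (i:ℕ) * h) - (u (x + s * (i:ℕ) * h) - S)‖ := by
              rw [sub_sub_cancel]
          _ ≤ _ := norm_sub_le _ _
      linarith [htay]
    have habs : |x + s * (i:ℕ) * h - x| = (i:ℝ) * h := by
      rw [add_sub_cancel_left, abs_mul, abs_mul, hs, abs_of_nonneg (le_of_lt hh),
        abs_of_nonneg (Nat.cast_nonneg i), one_mul]
    have hpow : Mn * |x + s * (i:ℕ) * h - x| ^ n ≤ Mn * (n * h) ^ n := by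
      apply mul_le_mul_of_nonneg_left _ hMn0
      rw [habs]
      apply pow_le_pow_left₀ (by positivity)
      have : (i:ℝ) ≤ (n:ℝ) := by exact_mod_cast le_of_lt i.isLt
      nlinarith
    calc ‖∑ k ∈ Finset.range n, (((x + s * (i:ℕ) * h - x) ^ k / Nat.factorial k : ℝ)) • d k‖
        ≤ ‖u (x + s * (i:ℕ) * h)‖ + Mn * |x + s * (i:ℕ) * h - x| ^ n := h1
      _ ≤ Mu + Mn * (n * h) ^ n := add_le_add (hMu _ (hJI hiJ)) hpow
  have hkey := hDp c B heval ⟨ℓ, hl⟩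
  have hcl : ‖c ⟨ℓ, hl⟩‖ = (h ^ ℓ / Nat.factorial ℓ) * ‖iteratedDerivWithin ℓ u I x‖ := by
    rw [hc]
    simp only
    rw [norm_smul, Real.norm_eq_abs, abs_div, abs_pow, abs_mul, hs, one_mul,
      abs_of_nonneg (le_of_lt hh), abs_of_nonneg (by positivity : (0:ℝ) ≤ (Nat.factorial ℓ : ℝ))]
    congr 1
    rw [hd]
    simp only
    rw [iterDeriv_subset hJI hI hJu hu (le_of_lt hl) hxJ]
  rw [hcl] at hkey
  have hfac : (0:ℝ) < Nat.factorial ℓ := by positivity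
  have hhl : (0:ℝ) < h ^ ℓ := by positivity
  rw [div_mul_eq_mul_div, div_le_iff₀ hfac] at hkey
  have h2 : ‖iteratedDerivWithin ℓ u I x‖ ≤ D * B * Nat.factorial ℓ / h ^ ℓ := by
    rw [le_div_iff₀ hhl]
    nlinarith [norm_nonneg (iteratedDerivWithin ℓ u I x)]
  calc ‖iteratedDerivWithin ℓ u I x‖ ≤ D * B * Nat.factorial ℓ / h ^ ℓ := h2
    _ = D * Nat.factorial ℓ * (B / h ^ ℓ) := by ring

private lemma additive_bound {n ℓ : ℕ} (hn : 2 ≤ n) (hl : ℓ < n) :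
    ∃ C > (0:ℝ), ∀ (a : ℝ) (I : Set ℝ), (I = Set.Ici a ∨ I = Set.Iic a) →
      ∀ (u : ℝ → ℂ) (Mu Mn : ℝ), ContDiffOn ℝ n u I →
        (∀ z ∈ I, ‖u z‖ ≤ Mu) → (∀ z ∈ I, ‖iteratedDerivWithin n u I z‖ ≤ Mn) →
        ∀ x ∈ I, ∀ h : ℝ, 0 < h →
          ‖iteratedDerivWithin ℓ u I x‖ ≤ C * (Mu / h ^ ℓ + Mn * h ^ (n - ℓ)) := by
  obtain ⟨D, hD, hDp⟩ := coeff_recovery n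
  refine ⟨D * Nat.factorial ℓ * n ^ n, by positivity, ?_⟩
  intro a I hI u Mu Mn hu hMu hMn x hx h hh
  have hMn0 : 0 ≤ Mn := le_trans (norm_nonneg _) (hMn x hx)
  have hMu0 : 0 ≤ Mu := le_trans (norm_nonneg _) (hMu x hx)
  have hcore : ‖iteratedDerivWithin ℓ u I x‖ ≤
      (D * Nat.factorial ℓ) * ((Mu + Mn * (n * h) ^ n) / h ^ ℓ) := by
    rcases hI with rfl | rfl
    · refine core_bound hn hl hDp (convex_Ici a) (uniqueDiffOn_Ici a) hu hMu hMn hx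
        (s := 1) abs_one hh ?_
      intro i hi
      simp only [Set.mem_Ici] at hx ⊢
      nlinarith [Nat.cast_nonneg (α := ℝ) i]
    · refine core_bound hn hl hDp (convex_Iic a) (uniqueDiffOn_Iic a) hu hMu hMn hx
        (s := -1) (by rw [abs_neg, abs_one]) hh ?_
      intro i hi
      simp only [Set.mem_Iic] at hx ⊢
      nlinarith [Nat.cast_nonneg (α := ℝ) i]
  have hhl : (0:ℝ) < h ^ ℓ := by positivity
  have hpow : (h:ℝ) ^ n = h ^ (n - ℓ) * h ^ ℓ := (pow_sub_mul_pow h (le_of_lt hl)).symm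
  have hsplit : (Mu + Mn * ((n:ℝ) * h) ^ n) / h ^ ℓ
      = Mu / h ^ ℓ + Mn * (n:ℝ) ^ n * h ^ (n - ℓ) := by
    rw [add_div]
    congr 1
    rw [mul_pow, hpow]
    field_simp
  rw [hsplit] at hcore
  have hnn1 : (1:ℝ) ≤ (n:ℝ) ^ n := one_le_pow₀ (by exact_mod_cast Nat.one_le_of_lt hn)
  have h2 : (D * Nat.factorial ℓ) * (Mu / h ^ ℓ + Mn * (n:ℝ) ^ n * h ^ (n - ℓ))
      ≤ D * Nat.factorial ℓ * n ^ n * (Mu / h ^ ℓ + Mn * h ^ (n - ℓ)) := by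
    have hfac : (0:ℝ) < Nat.factorial ℓ := by positivity
    have hq : (0:ℝ) ≤ Mu / h ^ ℓ := by positivity
    have hr : (0:ℝ) ≤ h ^ (n - ℓ) := by positivity
    nlinarith [mul_nonneg (mul_nonneg (le_of_lt hD) (le_of_lt hfac))
        (mul_nonneg hq (sub_nonneg.mpr hnn1)),
      mul_pos hD hfac, mul_nonneg hMn0 hr]
  exact le_trans hcore h2

/-- Landau–Kolmogorov interpolation inequality on half-lines: for `0 ≤ ℓ ≤ n` there is a
constant `C > 0` such that for every half-line `I` and every `C^n` function `u` on `I`,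
`‖u^{(ℓ)}‖_{L^∞(I)} ≤ C ‖u‖_{L^∞(I)}^{1-ℓ/n} ‖u^{(n)}‖_{L^∞(I)}^{ℓ/n}`. -/
theorem landau_kolmogorov_halfline (ℓ n : ℕ) (hln : ℓ ≤ n) :
    ∃ C > 0, ∀ (a : ℝ) (I : Set ℝ), (I = Set.Ici a ∨ I = Set.Iic a) →
      ∀ (u : ℝ → ℂ) (Mu Mn : ℝ), ContDiffOn ℝ n u I →
        (∀ x ∈ I, ‖u x‖ ≤ Mu) →
        (∀ x ∈ I, ‖iteratedDerivWithin n u I x‖ ≤ Mn) →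
        ∀ x ∈ I, ‖iteratedDerivWithin ℓ u I x‖ ≤
          C * Mu ^ (1 - (ℓ : ℝ) / n) * Mn ^ ((ℓ : ℝ) / n) := by
  rcases Nat.eq_zero_or_pos n with rfl | hn0
  · -- n = 0, so ℓ = 0
    interval_cases ℓ
    refine ⟨1, one_pos, ?_⟩
    intro a I hI u Mu Mn hu hMu hMn x hx
    have hMu0 : 0 ≤ Mu := le_trans (norm_nonneg _) (hMu x hx)
    simp only [Nat.cast_zero, div_zero, sub_zero, Real.rpow_one, Real.rpow_zero,
      iteratedDerivWithin_zero, one_mul, mul_one]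
    exact hMu x hx
  rcases Nat.eq_zero_or_pos ℓ with rfl | hl0
  · -- ℓ = 0 < n
    refine ⟨1, one_pos, ?_⟩
    intro a I hI u Mu Mn hu hMu hMn x hx
    simp only [Nat.cast_zero, zero_div, sub_zero, Real.rpow_one, Real.rpow_zero,
      iteratedDerivWithin_zero, one_mul, mul_one]
    exact hMu x hx
  rcases eq_or_lt_of_le hln with rfl | hl
  · -- ℓ = n > 0
    refine ⟨1, one_pos, ?_⟩
    intro a I hI u Mu Mn hu hMu hMn x hx
    have hd : (ℓ : ℝ) / ℓ = 1 := div_self (by exact_mod_cast Nat.pos_iff_ne_zero.mp hl0)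
    rw [hd, sub_self, Real.rpow_zero, Real.rpow_one, one_mul, one_mul]
    exact hMn x hx
  -- main case : 0 < ℓ < n, so n ≥ 2
  have hn2 : 2 ≤ n := by omega
  obtain ⟨C₀, hC₀, hadd⟩ := additive_bound hn2 hl
  refine ⟨2 * C₀, by positivity, ?_⟩
  intro a I hI u Mu Mn hu hMu hMn x hx
  have key : ∀ h : ℝ, 0 < h → ‖iteratedDerivWithin ℓ u I x‖
      ≤ C₀ * (Mu / h ^ ℓ + Mn * h ^ (n - ℓ)) := fun h hh =>
    hadd a I hI u Mu Mn hu hMu hMn x hx h hh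
  set v := ‖iteratedDerivWithin ℓ u I x‖ with hv
  have hv0 : 0 ≤ v := norm_nonneg _
  have hMn0 : 0 ≤ Mn := le_trans (norm_nonneg _) (hMn x hx)
  have hMu0 : 0 ≤ Mu := le_trans (norm_nonneg _) (hMu x hx)
  set α : ℝ := (ℓ : ℝ) / n with hα
  have hna : (0:ℝ) < n := by exact_mod_cast hn0
  have hα0 : 0 < α := div_pos (by exact_mod_cast hl0) hna
  have hα1 : α < 1 := (div_lt_one hna).mpr (by exact_mod_cast hl)
  rcases eq_or_lt_of_le hMu0 with hMu' | hMu'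
  · -- Mu = 0 : RHS is 0, show v ≤ 0
    rw [← hMu', Real.zero_rpow (by linarith : 1 - α ≠ 0), mul_zero, zero_mul]
    by_contra hc
    push_neg at hc
    set h : ℝ := min 1 (v / (2 * C₀ * Mn + 1)) with hh
    have hh0 : 0 < h := lt_min one_pos (by positivity)
    have hh1 : h ≤ 1 := min_le_left _ _
    have h1 := key h hh0
    rw [← hMu', zero_div, zero_add] at h1
    have h2 : h ^ (n - ℓ) ≤ h := by
      calc h ^ (n - ℓ) ≤ h ^ 1 := pow_le_pow_of_le_one (le_of_lt hh0) hh1 (by omega)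
        _ = h := pow_one h
    have h3 : v ≤ C₀ * (Mn * h) := by
      refine le_trans h1 ?_
      have := mul_le_mul_of_nonneg_left h2 hMn0
      nlinarith
    have h4 : h ≤ v / (2 * C₀ * Mn + 1) := min_le_right _ _
    have h5 : C₀ * (Mn * h) ≤ C₀ * Mn * v / (2 * C₀ * Mn + 1) := by
      calc C₀ * (Mn * h) = C₀ * Mn * h := by ring
        _ ≤ C₀ * Mn * (v / (2 * C₀ * Mn + 1)) :=
            mul_le_mul_of_nonneg_left h4 (by positivity)
        _ = C₀ * Mn * v / (2 * C₀ * Mn + 1) := by ring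
    have h6 : C₀ * Mn * v / (2 * C₀ * Mn + 1) < v := by
      rw [div_lt_iff₀ (by positivity)]
      nlinarith
    linarith
  rcases eq_or_lt_of_le hMn0 with hMn' | hMn'
  · -- Mn = 0 : RHS is 0
    rw [← hMn', Real.zero_rpow (ne_of_gt hα0), mul_zero]
    by_contra hc
    push_neg at hc
    set h : ℝ := max 1 (C₀ * Mu / v + 1) with hh
    have hh0 : 0 < h := lt_of_lt_of_le one_pos (le_max_left _ _)
    have h1 := key h hh0
    rw [← hMn', zero_mul, add_zero] at h1
    have h2 : h ≤ h ^ ℓ := le_self_pow₀ (le_max_left _ _) (by omega)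
    have h3 : C₀ * Mu / v < h := lt_of_lt_of_le (lt_add_one _) (le_max_right _ _)
    have h4 : C₀ * Mu < v * h ^ ℓ := by
      have : C₀ * Mu < v * h := by
        rw [div_lt_iff₀ hc] at h3
        nlinarith
      nlinarith
    have h5 : C₀ * (Mu / h ^ ℓ) < v := by
      rw [mul_div_assoc', div_lt_iff₀ (by positivity : (0:ℝ) < h ^ ℓ)]
      linarith
    linarith
  · -- Mu > 0, Mn > 0 : optimize h
    set q : ℝ := Mu / Mn with hq
    have hq0 : 0 < q := div_pos hMu' hMn'
    set h : ℝ := q ^ ((1:ℝ) / n) with hh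
    have hh0 : 0 < h := Real.rpow_pos_of_pos hq0 _
    have hA : h ^ ℓ = q ^ α := by
      rw [hh, ← Real.rpow_natCast (q ^ ((1:ℝ)/n)) ℓ, ← Real.rpow_mul (le_of_lt hq0), hα]
      congr 1
      field_simp
    have hB : h ^ (n - ℓ) = q ^ (1 - α) := by
      rw [hh, ← Real.rpow_natCast (q ^ ((1:ℝ)/n)) (n - ℓ), ← Real.rpow_mul (le_of_lt hq0), hα]
      congr 1
      rw [Nat.cast_sub (le_of_lt hl)]
      field_simp
    set E : ℝ := Mu ^ (1 - α) * Mn ^ α with hE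
    have e1 : Mu / h ^ ℓ = E := by
      rw [hA, hq, Real.div_rpow hMu0 hMn0, div_div_eq_mul_div, mul_div_right_comm, hE,
        Real.rpow_sub hMu', Real.rpow_one]
    have e2 : Mn * h ^ (n - ℓ) = E := by
      rw [hB, hq, Real.div_rpow hMu0 hMn0, hE]
      rw [Real.rpow_sub hMu', Real.rpow_one, Real.rpow_sub hMn', Real.rpow_one]
      field_simp
    have := key h hh0
    rw [e1, e2] at this
    calc v ≤ C₀ * (E + E) := this
      _ = 2 * C₀ * E := by ring
      _ = 2 * C₀ * Mu ^ (1 - α) * Mn ^ α := by rw [hE]; ring
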